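/- arXiv:2010.05231 — 7 statements merged into one kernel-verified Lean document; each statement's English description precedes it below -/
import Mathlib

section
/- (Conversion Principle) Let g : {1,2,...} → ℝ be any function with g(1) = 1. Then for all integers n ≥ 1 and 1 ≤ m ≤ n one has A_{n,m}^{g,id} = (1/m!) · A_{n,m}^{g̃,1}. -/
/-- The polynomials `P_n^{g,h}` defined by `P_0 = 1` and
`P_n(x) = (x / h(n)) * ∑_{k=1}^n g(k) P_{n-k}(x)` for `n ≥ 1`. -/
noncomputable def HVP (g h : ℕ → ℝ) : ℕ → Polynomial ℝ
  | 0 => 1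
  | (n + 1) =>
      Polynomial.C (h (n + 1))⁻¹ * Polynomial.X *
        ∑ k ∈ (Finset.Icc 1 (n + 1)).attach, Polynomial.C (g k.1) * HVP g h (n + 1 - k.1)
  decreasing_by
    have := (Finset.mem_Icc.mp k.2).1
    omega

/-- `A_{n,m}^{g,h}`, the coefficient of `x^m` in `P_n^{g,h}(x)`.
(It vanishes automatically unless `1 ≤ m ≤ n`, except `A_{0,0} = 1`.) -/
noncomputable def HVA (g h : ℕ → ℝ) (n m : ℕ) : ℝ := (HVP g h n).coeff m

/-- The power series `G̃(t) = ∑_{k ≥ 1} (g(k)/k) t^k`. -/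
noncomputable def cGt (g : ℕ → ℝ) : PowerSeries ℝ :=
  PowerSeries.mk fun k => if k = 0 then 0 else g k / k

lemma cGt_coeff (g : ℕ → ℝ) (k : ℕ) :
    PowerSeries.coeff k (cGt g) = if k = 0 then 0 else g k / k := by
  simp [cGt]

lemma sum_range_succ_eq_icc (n : ℕ) (f : ℕ → ℝ) :
    ∑ k ∈ Finset.range (n+1), f k = f 0 + ∑ k ∈ Finset.Icc 1 n, f k := by
  have h : Finset.range (n+1) = insert 0 (Finset.Icc 1 n) := by
    ext x; simp [Finset.mem_range, Finset.mem_Icc]; omega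
  rw [h, Finset.sum_insert (by simp)]

lemma sum_icc_shift (n : ℕ) (f : ℕ → ℝ) :
    ∑ k ∈ Finset.Icc 1 (n+1), f k = ∑ k ∈ Finset.range (n+1), f (1+k) := by
  rw [show Finset.Icc 1 (n+1) = Finset.Ico 1 (n+2) by rfl, Finset.sum_Ico_eq_sum_range]
  rfl

lemma cGt_pow_coeff_zero (g : ℕ → ℝ) (m : ℕ) :
    PowerSeries.coeff 0 (cGt g ^ m) = if m = 0 then 1 else 0 := by
  rw [PowerSeries.coeff_zero_eq_constantCoeff, map_pow]
  have : PowerSeries.constantCoeff (cGt g) = 0 := by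
    rw [← PowerSeries.coeff_zero_eq_constantCoeff, cGt_coeff]; simp
  rw [this]
  rcases m with _ | m <;> simp

lemma cGt_pow_coeff_succ (g : ℕ → ℝ) (m n : ℕ) :
    PowerSeries.coeff n (cGt g ^ (m+1))
      = ∑ k ∈ Finset.Icc 1 n, (g k / k) * PowerSeries.coeff (n - k) (cGt g ^ m) := by
  rw [pow_succ, mul_comm, PowerSeries.coeff_mul,
    Finset.Nat.sum_antidiagonal_eq_sum_range_succ_mk]
  rcases n with _ | n
  · simp [cGt_coeff]
  · rw [sum_range_succ_eq_icc]
    simp only [cGt_coeff]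
    rw [if_true, zero_mul, zero_add]
    refine Finset.sum_congr rfl fun x hx => ?_
    rw [if_neg (by have := (Finset.mem_Icc.mp hx).1; omega)]

lemma HVA_zero (g h : ℕ → ℝ) (m : ℕ) :
    HVA g h 0 m = if m = 0 then 1 else 0 := by
  rw [HVA, HVP]
  exact Polynomial.coeff_one

lemma HVA_succ_zero (g h : ℕ → ℝ) (n : ℕ) : HVA g h (n+1) 0 = 0 := by
  rw [HVA, HVP, mul_assoc]
  simp [Polynomial.coeff_C_mul, Polynomial.mul_coeff_zero]

lemma HVA_succ (g h : ℕ → ℝ) (n m : ℕ) :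
    HVA g h (n+1) (m+1)
      = (h (n+1))⁻¹ * ∑ k ∈ Finset.Icc 1 (n+1), g k * HVA g h (n+1-k) m := by
  rw [HVA, HVP, mul_assoc, Polynomial.coeff_C_mul, Polynomial.coeff_X_mul,
    Polynomial.finset_sum_coeff]
  congr 1
  rw [← Finset.sum_attach (Finset.Icc 1 (n+1)) (fun k => g k * HVA g h (n+1-k) m)]
  exact Finset.sum_congr rfl fun k _ => by rw [Polynomial.coeff_C_mul]; rfl

lemma B_eq (g : ℕ → ℝ) : ∀ n m,
    HVA (fun k => g k / k) (fun _ => 1) n m = PowerSeries.coeff n (cGt g ^ m) := by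
  intro n
  induction n using Nat.strong_induction_on with
  | _ n ih =>
    rcases n with _ | n
    · intro m; rw [HVA_zero, cGt_pow_coeff_zero]
    · intro m
      rcases m with _ | m
      · rw [HVA_succ_zero, pow_zero, PowerSeries.coeff_one, if_neg (by omega)]
      · rw [HVA_succ, cGt_pow_coeff_succ, inv_one, one_mul]
        refine Finset.sum_congr rfl fun k hk => ?_
        have hk1 := (Finset.mem_Icc.mp hk).1
        rw [ih (n+1-k) (by omega)]

lemma deriv_key (g : ℕ → ℝ) (m n : ℕ) :
    ((n+1 : ℕ) : ℝ) * PowerSeries.coeff (n+1) (cGt g ^ (m+1))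
      = ((m+1 : ℕ) : ℝ) *
        ∑ k ∈ Finset.Icc 1 (n+1), g k * PowerSeries.coeff (n+1-k) (cGt g ^ m) := by
  have hd : PowerSeries.derivative ℝ (cGt g ^ (m+1))
      = (m+1) • ((cGt g ^ m) * PowerSeries.derivative ℝ (cGt g)) := by
    rw [Derivation.leibniz_pow]
    rw [smul_eq_mul]
    rfl
  have h1 : PowerSeries.coeff n (PowerSeries.derivative ℝ (cGt g ^ (m+1)))
      = PowerSeries.coeff (n+1) (cGt g ^ (m+1)) * ((n : ℝ)+1) :=
    PowerSeries.coeff_derivative _ _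
  have hdc : ∀ j : ℕ, PowerSeries.coeff j (PowerSeries.derivative ℝ (cGt g))
      = g (j+1) := by
    intro j
    rw [PowerSeries.coeff_derivative, cGt_coeff, if_neg (by omega)]
    push_cast
    rw [div_mul_cancel₀]
    exact Nat.cast_add_one_ne_zero j
  have hcast : ((n+1 : ℕ) : ℝ) = (n : ℝ) + 1 := by push_cast; ring
  rw [hcast, mul_comm ((n : ℝ) + 1), ← h1, hd, map_nsmul, nsmul_eq_mul,
    PowerSeries.coeff_mul, Finset.Nat.sum_antidiagonal_eq_sum_range_succ_mk]
  push_cast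
  congr 1
  rw [sum_icc_shift, ← Finset.sum_range_reflect
    (fun j => g (1+j) * PowerSeries.coeff (n+1-(1+j)) (cGt g ^ m)) (n+1)]
  refine Finset.sum_congr rfl fun k hk => ?_
  have hk' := Finset.mem_range.mp hk
  simp only [hdc]
  have e1 : n + 1 - 1 - k = n - k := by omega
  have e2 : 1 + (n - k) = n - k + 1 := by omega
  have e3 : n + 1 - (1 + (n - k)) = k := by omega
  rw [e1, e2, show n + 1 - (n - k + 1) = k from by omega, mul_comm]

lemma A_eq (g : ℕ → ℝ) : ∀ n m,
    HVA g (fun k => (k : ℝ)) n m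
      = (1 / (Nat.factorial m : ℝ)) * PowerSeries.coeff n (cGt g ^ m) := by
  intro n
  induction n using Nat.strong_induction_on with
  | _ n ih =>
    rcases n with _ | n
    · intro m
      rw [HVA_zero, cGt_pow_coeff_zero]
      rcases m with _ | m <;> simp
    · intro m
      rcases m with _ | m
      · rw [HVA_succ_zero, pow_zero, PowerSeries.coeff_one, if_neg (by omega), mul_zero]
      · rw [HVA_succ]
        have hsum : ∑ k ∈ Finset.Icc 1 (n+1), g k * HVA g (fun k => (k : ℝ)) (n+1-k) m
            = (1 / (Nat.factorial m : ℝ)) *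
              ∑ k ∈ Finset.Icc 1 (n+1), g k * PowerSeries.coeff (n+1-k) (cGt g ^ m) := by
          rw [Finset.mul_sum]
          refine Finset.sum_congr rfl fun k hk => ?_
          have hk1 := (Finset.mem_Icc.mp hk).1
          rw [ih (n+1-k) (by omega)]
          ring
        rw [hsum]
        have hkey := deriv_key g m n
        have hm1 : ((m+1 : ℕ) : ℝ) ≠ 0 := by positivity
        have hn1 : ((n+1 : ℕ) : ℝ) ≠ 0 := by positivity
        set C := PowerSeries.coeff (n+1) (cGt g ^ (m+1)) with hC
        have hs : ∑ k ∈ Finset.Icc 1 (n+1), g k * PowerSeries.coeff (n+1-k) (cGt g ^ m)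
            = ((n+1 : ℕ) : ℝ) / ((m+1 : ℕ) : ℝ) * C := by
          rw [div_mul_eq_mul_div, eq_div_iff hm1]
          linarith [hkey]
        rw [hs]
        have hfac : (Nat.factorial (m+1) : ℝ) = ((m+1 : ℕ) : ℝ) * (Nat.factorial m : ℝ) := by
          rw [Nat.factorial_succ]; push_cast; ring
        rw [hfac]
        have hf : (Nat.factorial m : ℝ) ≠ 0 := by positivity
        field_simp

/-- **Conversion Principle.** For any `g` with `g(1) = 1`, for all `1 ≤ m ≤ n`,
`A_{n,m}^{g,id} = (1/m!) · A_{n,m}^{g̃,1}` where `g̃(n) = g(n)/n`. -/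
theorem conversion_principle (g : ℕ → ℝ) (hg1 : g 1 = 1)
    (n m : ℕ) (hn : 1 ≤ n) (hm : 1 ≤ m) (hmn : m ≤ n) :
    HVA g (fun k => (k : ℝ)) n m
      = (1 / (Nat.factorial m : ℝ)) * HVA (fun k => g k / (k : ℝ)) (fun _ => 1) n m := by
  rw [A_eq, B_eq]
end

section
/- Let g : {1,2,...} → ℝ be a function with g(1) = 1 and g(n) > 0 for all n. Fix n ≥ 1. If the coefficient sequence of P_n^{g̃,1}(x) is log-concave (i.e., (A_{n,m}^{g̃,1})² ≥ A_{n,m-1}^{g̃,1} · A_{n,m+1}^{g̃,1} for all 1 ≤ m ≤ n, with coefficients outside 1 ≤ m ≤ n taken to be 0), then the coefficient sequence of P_n^{g,id}(x) is log-concave. -/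
lemma HVA_coeff_zero (g h : ℕ → ℝ) (n : ℕ) :
    HVA g h n 0 = if n = 0 then 1 else 0 := by
  cases n with
  | zero => simp [HVA_zero]
  | succ n => simp [HVA_succ_zero]

lemma HVA_nonneg (g h : ℕ → ℝ) (hg : ∀ k, 0 ≤ g k) (hh : ∀ k, 0 ≤ (h k)⁻¹) :
    ∀ n m, 0 ≤ HVA g h n m := by
  intro n
  induction n using Nat.strong_induction_on with
  | _ n ih =>
    match n with
    | 0 =>
      intro m; rw [HVA_zero]; split <;> norm_num
    | n+1 =>
      intro m
      match m with
      | 0 => rw [HVA_succ_zero]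
      | m+1 =>
        rw [HVA_succ]
        refine mul_nonneg (hh _) (Finset.sum_nonneg fun k hk => ?_)
        obtain ⟨hk1, hk2⟩ := Finset.mem_Icc.mp hk
        exact mul_nonneg (hg k) (ih (n+1-k) (by omega) m)

lemma B_rec (g : ℕ → ℝ) (n m : ℕ) :
    HVA (fun k => g k / (k : ℝ)) (fun _ => 1) n (m+1)
      = ∑ k ∈ Finset.Icc 1 n,
          (g k / (k : ℝ)) * HVA (fun k => g k / (k : ℝ)) (fun _ => 1) (n-k) m := by
  cases n with
  | zero => simp [HVA_zero]
  | succ n => rw [HVA_succ]; norm_num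

lemma euler (g : ℕ → ℝ) (m : ℕ) :
    ∀ n : ℕ, (n : ℝ) * HVA (fun k => g k / (k : ℝ)) (fun _ => 1) n (m+1)
      = ((m : ℝ) + 1) * ∑ k ∈ Finset.Icc 1 n,
          g k * HVA (fun k => g k / (k : ℝ)) (fun _ => 1) (n-k) m := by
  set B := HVA (fun k => g k / (k : ℝ)) (fun _ => (1:ℝ)) with hB
  induction m with
  | zero =>
    intro n
    cases n with
    | zero => simp
    | succ N =>
      have hne : ((N:ℝ)+1) ≠ 0 := by positivity
      rw [hB, B_rec, Finset.mul_sum, Finset.mul_sum]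
      rw [Finset.sum_eq_single_of_mem (N+1)
            (Finset.mem_Icc.mpr ⟨by omega, le_refl _⟩)
            (fun k hk hne2 => by
              obtain ⟨h1, h2⟩ := Finset.mem_Icc.mp hk
              rw [HVA_coeff_zero, if_neg (by omega : ¬ (N+1-k = 0))]; ring),
          Finset.sum_eq_single_of_mem (N+1)
            (Finset.mem_Icc.mpr ⟨by omega, le_refl _⟩)
            (fun k hk hne2 => by
              obtain ⟨h1, h2⟩ := Finset.mem_Icc.mp hk
              rw [HVA_coeff_zero, if_neg (by omega : ¬ (N+1-k = 0))]; ring)]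
      rw [Nat.sub_self, HVA_coeff_zero, if_pos rfl]
      push_cast
      field_simp
      ring
  | succ m ih =>
    intro n
    cases n with
    | zero => simp [hB, HVA_zero]
    | succ N =>
      set n := N + 1 with hn
      rw [hB, B_rec, ← hB, Finset.mul_sum]
      have key : ∀ k ∈ Finset.Icc 1 n,
          (n : ℝ) * ((g k / (k : ℝ)) * B (n-k) (m+1))
            = g k * B (n-k) (m+1)
              + ((m : ℝ) + 1) * ∑ j ∈ Finset.Icc 1 (n-k),
                  g j * ((g k / (k : ℝ)) * B (n-k-j) m) := by
        intro k hk
        obtain ⟨hk1, hk2⟩ := Finset.mem_Icc.mp hk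
        have hkR : (k : ℝ) ≠ 0 := Nat.cast_ne_zero.mpr (by omega)
        have hcast : (n : ℝ) = (k : ℝ) + ((n - k : ℕ) : ℝ) := by
          have := Nat.cast_sub (R := ℝ) hk2
          linarith
        rw [hcast, add_mul]
        congr 1
        · field_simp
        · rw [mul_left_comm, ih (n-k), Finset.mul_sum, Finset.mul_sum, Finset.mul_sum]
          congr 1
          ext j
          ring
      rw [Finset.sum_congr rfl key, Finset.sum_add_distrib]
      have swap : ∑ k ∈ Finset.Icc 1 n, ((m:ℝ)+1) * ∑ j ∈ Finset.Icc 1 (n-k),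
            g j * ((g k / (k : ℝ)) * B (n-k-j) m)
          = ((m:ℝ)+1) * ∑ k ∈ Finset.Icc 1 n, g k * B (n-k) (m+1) := by
        rw [← Finset.mul_sum]
        congr 1
        rw [Finset.sum_comm' (t' := Finset.Icc 1 n) (s' := fun j => Finset.Icc 1 (n-j))
            (f := fun k j => g j * ((g k / (k : ℝ)) * B (n-k-j) m))
            (by intro k j; simp only [Finset.mem_Icc]; omega)]
        refine Finset.sum_congr rfl (fun j hj => ?_)
        rw [hB, B_rec, ← hB, Finset.mul_sum]
        refine Finset.sum_congr rfl (fun k hk => ?_)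
        rw [show n - k - j = n - j - k by omega]
      rw [swap]
      push_cast
      ring

lemma fact_mul (g : ℕ → ℝ) :
    ∀ n m : ℕ, (Nat.factorial m : ℝ) * HVA g (fun k => (k : ℝ)) n m
      = HVA (fun k => g k / (k : ℝ)) (fun _ => 1) n m := by
  intro n
  induction n using Nat.strong_induction_on with
  | _ n ih =>
    match n with
    | 0 =>
      intro m
      rw [HVA_zero, HVA_zero]
      split <;> simp_all
    | N+1 =>
      intro m
      match m with
      | 0 => rw [HVA_succ_zero, HVA_succ_zero, mul_zero]
      | m+1 =>
        rw [HVA_succ]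
        have hS : (Nat.factorial m : ℝ) * ∑ k ∈ Finset.Icc 1 (N+1),
              g k * HVA g (fun k => (k : ℝ)) (N+1-k) m
            = ∑ k ∈ Finset.Icc 1 (N+1),
                g k * HVA (fun k => g k / (k : ℝ)) (fun _ => 1) (N+1-k) m := by
          rw [Finset.mul_sum]
          refine Finset.sum_congr rfl (fun k hk => ?_)
          obtain ⟨h1, h2⟩ := Finset.mem_Icc.mp hk
          rw [mul_left_comm, ih (N+1-k) (by omega)]
        have heuler := euler g m (N+1)
        have hNe : ((N+1 : ℕ) : ℝ) ≠ 0 := Nat.cast_ne_zero.mpr (by omega)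
        have hfact : (Nat.factorial (m+1) : ℝ) = ((m:ℝ)+1) * (Nat.factorial m : ℝ) := by
          rw [Nat.factorial_succ]; push_cast; ring
        calc (Nat.factorial (m+1) : ℝ) *
              ((((N+1 : ℕ)) : ℝ)⁻¹ * ∑ k ∈ Finset.Icc 1 (N+1),
                g k * HVA g (fun k => (k : ℝ)) (N+1-k) m)
            = (((N+1 : ℕ) : ℝ))⁻¹ * (((m:ℝ)+1) * ((Nat.factorial m : ℝ) *
                ∑ k ∈ Finset.Icc 1 (N+1),
                  g k * HVA g (fun k => (k : ℝ)) (N+1-k) m)) := by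
              rw [hfact]; ring
          _ = (((N+1 : ℕ) : ℝ))⁻¹ * (((m:ℝ)+1) *
                ∑ k ∈ Finset.Icc 1 (N+1),
                  g k * HVA (fun k => g k / (k : ℝ)) (fun _ => 1) (N+1-k) m) := by
              rw [hS]
          _ = (((N+1 : ℕ) : ℝ))⁻¹ * (((N+1 : ℕ) : ℝ) *
                HVA (fun k => g k / (k : ℝ)) (fun _ => 1) (N+1) (m+1)) := by
              rw [← heuler]
          _ = HVA (fun k => g k / (k : ℝ)) (fun _ => 1) (N+1) (m+1) := by
              rw [← mul_assoc, inv_mul_cancel₀ hNe, one_mul]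


/-- If the coefficient sequence of `P_n^{g̃,1}` is log-concave, then so is that of
`P_n^{g,id}` (coefficients outside `1 ≤ m ≤ n` are `0` automatically). -/
theorem logConcave_transfer (g : ℕ → ℝ) (hg1 : g 1 = 1)
    (hgpos : ∀ k, 1 ≤ k → 0 < g k) (n : ℕ) (hn : 1 ≤ n)
    (H : ∀ m, 1 ≤ m →
      HVA (fun k => g k / (k : ℝ)) (fun _ => 1) n m ^ 2 ≥
        HVA (fun k => g k / (k : ℝ)) (fun _ => 1) n (m - 1) *
          HVA (fun k => g k / (k : ℝ)) (fun _ => 1) n (m + 1)) :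
    ∀ m, 1 ≤ m →
      HVA g (fun k => (k : ℝ)) n m ^ 2 ≥
        HVA g (fun k => (k : ℝ)) n (m - 1) * HVA g (fun k => (k : ℝ)) n (m + 1) := by
  intro m hm
  obtain ⟨m', rfl⟩ : ∃ m', m = m' + 1 := ⟨m - 1, by omega⟩
  have hA : ∀ j, HVA g (fun k => (k : ℝ)) n j
      = HVA (fun k => g k / (k : ℝ)) (fun _ => 1) n j / (Nat.factorial j : ℝ) := by
    intro j
    have hj : (Nat.factorial j : ℝ) ≠ 0 :=
      Nat.cast_ne_zero.mpr (Nat.factorial_ne_zero j)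
    rw [eq_div_iff hj, mul_comm]
    exact fact_mul g n j
  have hgt : ∀ k : ℕ, 0 ≤ g k / (k : ℝ) := by
    intro k
    match k with
    | 0 => simp
    | k+1 =>
      have := hgpos (k+1) (by omega)
      positivity
  have hBnn : ∀ j, 0 ≤ HVA (fun k => g k / (k : ℝ)) (fun _ => 1) n j :=
    fun j => HVA_nonneg _ _ hgt (fun k => by norm_num) n j
  have hb := H (m'+1) (by omega)
  simp only [Nat.add_sub_cancel] at hb ⊢
  rw [hA, hA, hA]
  set a := HVA (fun k => g k / (k : ℝ)) (fun _ => 1) n m' with ha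
  set b := HVA (fun k => g k / (k : ℝ)) (fun _ => 1) n (m'+1) with hbb
  set c := HVA (fun k => g k / (k : ℝ)) (fun _ => 1) n (m'+2) with hc
  have hann : 0 ≤ a := hBnn m'
  have hcnn : 0 ≤ c := hBnn (m'+2)
  set D := (Nat.factorial m' : ℝ) with hD
  set F := (Nat.factorial (m'+1) : ℝ) with hF
  set E := (Nat.factorial (m'+2) : ℝ) with hE
  have hDpos : 0 < D := by rw [hD]; exact_mod_cast Nat.factorial_pos m'
  have hFpos : 0 < F := by rw [hF]; exact_mod_cast Nat.factorial_pos (m'+1)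
  have hEpos : 0 < E := by rw [hE]; exact_mod_cast Nat.factorial_pos (m'+2)
  have hF' : F = ((m' : ℝ) + 1) * D := by
    rw [hF, hD, Nat.factorial_succ]; push_cast; ring
  have hE' : E = ((m' : ℝ) + 2) * F := by
    rw [hE, hF, Nat.factorial_succ (m'+1)]; push_cast; ring
  have hDE : F ^ 2 ≤ D * E := by nlinarith [hDpos, hFpos]
  rw [ge_iff_le, div_pow, div_mul_div_comm, div_le_div_iff₀ (by positivity) (by positivity)]
  nlinarith [mul_nonneg (mul_nonneg hann hcnn) (sub_nonneg.mpr hDE),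
    mul_nonneg (sub_nonneg.mpr hb) (le_of_lt (mul_pos hDpos hEpos))]
end

section
/- For all 1 ≤ m ≤ n one has A_{n,m}^{id,id} = (1/m!) · C(n−1, m−1), where C(·,·) is the binomial coefficient; equivalently, P_n^{id,id}(x) = ∑_{m=1}^n (1/m!) C(n−1, m−1) x^m. -/
theorem hockey (n r : ℕ) : ∑ j ∈ Finset.range (n+1), j.choose r = (n+1).choose (r+1) := by
  induction n with
  | zero => simp [Nat.choose]
  | succ n ih =>
    rw [Finset.sum_range_succ, ih]
    exact (Nat.add_comm _ _).trans (Nat.choose_succ_succ (n+1) r).symm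

theorem shiftsum (n : ℕ) (f : ℕ → ℕ) :
    ∑ k ∈ Finset.Icc 1 (n+1), f k = ∑ j ∈ Finset.range (n+1), f (1+j) := by
  rw [← Finset.Ico_add_one_right_eq_Icc, Finset.sum_Ico_eq_sum_range]; rfl

theorem key (n r : ℕ) : ∑ k ∈ Finset.Icc 1 n, k * (n-k).choose r = (n+1).choose (r+2) := by
  induction n with
  | zero => simp [Nat.choose_eq_zero_of_lt]
  | succ n ih =>
    rw [shiftsum n (fun k => k * (n+1-k).choose r)]
    have h2 : ∀ j ∈ Finset.range (n+1), (1+j) * (n+1-(1+j)).choose r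
        = j * (n-j).choose r + (n-j).choose r := by
      intro j hj
      have : n+1-(1+j) = n - j := by omega
      rw [this]; ring
    rw [Finset.sum_congr rfl h2, Finset.sum_add_distrib]
    have h3 : ∑ j ∈ Finset.range (n+1), j * (n-j).choose r
        = ∑ k ∈ Finset.Icc 1 n, k * (n-k).choose r := by
      cases n with
      | zero => simp
      | succ n =>
        rw [shiftsum n (fun k => k * (n+1-k).choose r)]
        rw [Finset.sum_range_succ' (fun j => j * (n+1-j).choose r)]
        simp [Nat.add_comm]
    have h4 : ∑ j ∈ Finset.range (n+1), (n-j).choose r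
        = ∑ j ∈ Finset.range (n+1), j.choose r := by
      rw [← Finset.sum_range_reflect]
      apply Finset.sum_congr rfl
      intro j hj; simp at hj; congr 1; omega
    rw [h3, ih, h4, hockey]
    exact (Nat.add_comm _ _).trans (Nat.choose_succ_succ (n+1) (r+1)).symm


noncomputable def A' (n m : ℕ) : ℝ :=
  if m = 0 then (if n = 0 then 1 else 0)
  else if m ≤ n then ((Nat.factorial m : ℝ))⁻¹ * ((n-1).choose (m-1) : ℝ) else 0

theorem arith (n m : ℕ) :
    ((n+1 : ℕ) : ℝ)⁻¹ * ∑ k ∈ Finset.Icc 1 (n+1), (k : ℝ) * A' (n+1-k) m = A' (n+1) (m+1) := by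
  cases m with
  | zero =>
    have hs : ∑ k ∈ Finset.Icc 1 (n+1), (k : ℝ) * A' (n+1-k) 0 = ((n+1 : ℕ) : ℝ) := by
      rw [Finset.sum_eq_single_of_mem (n+1) (by simp)]
      · simp [A']
      · intro k hk hne
        simp only [Finset.mem_Icc] at hk
        have : n+1-k ≠ 0 := by omega
        simp [A', this]
    rw [hs]
    have hpos : ((n+1 : ℕ) : ℝ) ≠ 0 := by positivity
    rw [inv_mul_cancel₀ hpos]
    simp [A', Nat.factorial]
  | succ r =>
    have hs : ∑ k ∈ Finset.Icc 1 (n+1), (k : ℝ) * A' (n+1-k) (r+1)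
        = ((Nat.factorial (r+1) : ℝ))⁻¹ * ((n+1).choose (r+2) : ℝ) := by
      rw [Finset.sum_Icc_succ_top (by omega : 1 ≤ n+1)]
      have h0 : A' (n+1-(n+1)) (r+1) = 0 := by simp [A']
      rw [h0, mul_zero, add_zero]
      have hcong : ∀ k ∈ Finset.Icc 1 n, (k : ℝ) * A' (n+1-k) (r+1)
          = ((Nat.factorial (r+1) : ℝ))⁻¹ * ((k : ℝ) * ((n-k).choose r : ℝ)) := by
        intro k hk
        simp only [Finset.mem_Icc] at hk
        by_cases hc : r+1 ≤ n+1-k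
        · have h1 : n+1-k ≠ 0 := by omega
          have h2 : n+1-k-1 = n-k := by omega
          simp only [A', if_neg (by omega : ¬ (r+1 = 0)), if_pos hc, h2]
          push_cast; ring
        · have h1 : n - k < r := by omega
          simp [A', hc, Nat.choose_eq_zero_of_lt h1]
      rw [Finset.sum_congr rfl hcong, ← Finset.mul_sum]
      congr 1
      push_cast [← key n r]
      rfl
    rw [hs]
    by_cases hle : r+2 ≤ n+1
    · have hid : ((n+1 : ℕ) : ℝ) * (n.choose (r+1) : ℝ) = ((n+1).choose (r+2) : ℝ) * ((r+2 : ℕ) : ℝ) := by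
        exact_mod_cast congrArg (Nat.cast : ℕ → ℝ) (Nat.add_one_mul_choose_eq n (r+1))
      simp only [A', if_neg (by omega : ¬ (r+1+1 = 0)), if_pos hle]
      have h1 : ((n+1 : ℕ) : ℝ) ≠ 0 := by positivity
      have h2 : ((Nat.factorial (r+1) : ℝ)) ≠ 0 := by positivity
      have h3 : ((Nat.factorial (r+2) : ℝ)) ≠ 0 := by positivity
      have hfact : (Nat.factorial (r+2) : ℝ) = ((r+2 : ℕ) : ℝ) * (Nat.factorial (r+1) : ℝ) := by
        rw [Nat.factorial_succ]; push_cast; ring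
      have hch : n+1-1 = n := by omega
      rw [hch]
      field_simp
      push_cast at hid hfact ⊢
      linear_combination (((n+1).choose (r+2) : ℕ) : ℝ) * hfact - (((r+1).factorial : ℕ) : ℝ) * hid
    · have hz : (n+1).choose (r+2) = 0 := Nat.choose_eq_zero_of_lt (by omega)
      simp [A', hz, hle]

theorem main : ∀ n m : ℕ, (HVP (fun k => (k:ℝ)) (fun k => (k:ℝ)) n).coeff m = A' n m := by
  intro n
  induction n using Nat.strong_induction_on with
  | _ n ih =>
    match n with
    | 0 =>
      intro m
      rw [HVP.eq_1, Polynomial.coeff_one]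
      simp only [A']
      split_ifs with h1 h2
      · rfl
      · omega
      · rfl
    | (n+1) =>
      intro m
      rw [HVP.eq_2, mul_assoc, Polynomial.coeff_C_mul]
      cases m with
      | zero =>
        rw [Polynomial.mul_coeff_zero, Polynomial.coeff_X_zero, zero_mul, mul_zero]
        simp [A']
      | succ m =>
        rw [Polynomial.coeff_X_mul, Polynomial.finset_sum_coeff]
        have hc : ∀ k ∈ (Finset.Icc 1 (n+1)).attach,
            (Polynomial.C ((k.1 : ℝ)) * HVP (fun k => (k:ℝ)) (fun k => (k:ℝ)) (n+1-k.1)).coeff m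
              = (k.1 : ℝ) * A' (n+1-k.1) m := by
          intro k _
          rw [Polynomial.coeff_C_mul,
            ih (n+1-k.1) (by have := (Finset.mem_Icc.mp k.2).1; omega)]
        rw [Finset.sum_congr rfl hc, Finset.sum_attach (Finset.Icc 1 (n+1)) (fun k : ℕ => ((k : ℕ) : ℝ) * A' (n+1-k) m)]
        exact arith n m

/-- `A_{n,m}^{id,id} = (1/m!) · C(n-1, m-1)` for `1 ≤ m ≤ n`; equivalently
`P_n^{id,id}(x) = ∑_{m=1}^n (1/m!) C(n-1, m-1) x^m` for `n ≥ 1`. -/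
theorem A_id_id :
    (∀ n m : ℕ, 1 ≤ m → m ≤ n →
      HVA (fun k => (k : ℝ)) (fun k => (k : ℝ)) n m
        = (1 / (Nat.factorial m : ℝ)) * (Nat.choose (n - 1) (m - 1) : ℝ)) ∧
    (∀ n : ℕ, 1 ≤ n →
      HVP (fun k => (k : ℝ)) (fun k => (k : ℝ)) n
        = ∑ m ∈ Finset.Icc 1 n,
            Polynomial.C ((1 / (Nat.factorial m : ℝ)) * (Nat.choose (n - 1) (m - 1) : ℝ)) *
              Polynomial.X ^ m) := by
  constructor
  · intro n m hm hmn
    rw [HVA, main, A', if_neg (by omega), if_pos hmn, one_div]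
  · intro n hn
    ext k
    rw [main]
    rw [Polynomial.finset_sum_coeff]
    simp only [Polynomial.coeff_C_mul, Polynomial.coeff_X_pow, mul_ite, mul_one, mul_zero]
    rw [Finset.sum_ite_eq (Finset.Icc 1 n) k
      (fun m => (1 / (Nat.factorial m : ℝ)) * ((n-1).choose (m-1) : ℝ))]
    simp only [Finset.mem_Icc, A']
    split_ifs <;> first | rfl | omega | rw [one_div]
end

section
/- The double sequence given by a_{n,m} = C(n+m−1, 2m−1) for 1 ≤ m ≤ n and a_{n,m} = 0 otherwise is both horizontally and vertically log-concave: for every fixed n ≥ 1 and every m ≥ 1, a_{n,m}² ≥ a_{n,m−1}·a_{n,m+1}, and for every fixed m ≥ 1 and every n ≥ 2, a_{n,m}² ≥ a_{n−1,m}·a_{n+1,m}. -/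
/-- Vertical log-concavity of binomial coefficients in the top argument. -/
lemma vert_key (N k : ℕ) :
    (Nat.choose N k : ℝ) * Nat.choose (N + 2) k ≤ (Nat.choose (N + 1) k : ℝ) ^ 2 := by
  rcases lt_or_ge N k with h | h
  · simp [Nat.choose_eq_zero_of_lt h]
  · obtain ⟨a, rfl⟩ : ∃ a, N = k + a := ⟨N - k, by omega⟩
    have h1 : (Nat.choose (k + a) k : ℝ) * (k + a + 1) =
        Nat.choose (k + a + 1) k * (a + 1) := by
      have := Nat.choose_mul_succ_eq (k + a) k
      have e : k + a + 1 - k = a + 1 := by omega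
      rw [e] at this
      exact_mod_cast congrArg (fun x : ℕ => (x : ℝ)) this
    have h2 : (Nat.choose (k + a + 1) k : ℝ) * (k + a + 2) =
        Nat.choose (k + a + 2) k * (a + 2) := by
      have := Nat.choose_mul_succ_eq (k + a + 1) k
      have e : k + a + 1 + 1 - k = a + 2 := by omega
      rw [e] at this
      have := congrArg (fun x : ℕ => (x : ℝ)) this
      push_cast at this ⊢
      linarith [this]
    set A : ℝ := ((Nat.choose (k + a) k : ℕ) : ℝ)
    set B : ℝ := ((Nat.choose (k + a + 1) k : ℕ) : ℝ)
    set C : ℝ := ((Nat.choose (k + a + 2) k : ℕ) : ℝ)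
    have hE : A * C * ((k + a + 1 : ℝ) * (a + 2)) = B ^ 2 * ((a + 1) * (k + a + 2)) := by
      linear_combination (C * (a + 2)) * h1 - (B * (a + 1)) * h2
    have hF : ((a : ℝ) + 1) * (k + a + 2) ≤ (k + a + 1 : ℝ) * (a + 2) := by nlinarith [Nat.cast_nonneg (α := ℝ) k]
    have hBsq : (0 : ℝ) ≤ B ^ 2 := by positivity
    have hpos : (0 : ℝ) < (k + a + 1 : ℝ) * (a + 2) := by positivity
    have : A * C * ((k + a + 1 : ℝ) * (a + 2)) ≤ B ^ 2 * ((k + a + 1 : ℝ) * (a + 2)) := by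
      rw [hE]; exact mul_le_mul_of_nonneg_left hF hBsq
    exact le_of_mul_le_mul_right this hpos

/-- Horizontal log-concavity along the relevant diagonal. -/
lemma horiz_key (N k : ℕ) :
    (Nat.choose N k : ℝ) * Nat.choose (N + 2) (k + 4) ≤ (Nat.choose (N + 1) (k + 2) : ℝ) ^ 2 := by
  rcases lt_or_ge N (k + 2) with h | h
  · have : N + 2 < k + 4 := by omega
    simp [Nat.choose_eq_zero_of_lt this]
  · obtain ⟨a, rfl⟩ : ∃ a, N = k + 2 + a := ⟨N - (k + 2), by omega⟩
    -- identity I : C(N,k) * (N+1) * (N-k) = C(N+1,k+2) * (k+1) * (k+2)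
    have I : (Nat.choose (k + 2 + a) k : ℝ) * ((k + 2 + a + 1) * (a + 2)) =
        Nat.choose (k + 2 + a + 1) (k + 2) * ((k + 1) * (k + 2)) := by
      have i1 := Nat.add_one_mul_choose_eq (k + 2 + a) k
      have i2 := Nat.choose_succ_right_eq (k + 2 + a + 1) (k + 1)
      have e : k + 2 + a + 1 - (k + 1) = a + 2 := by omega
      rw [e] at i2
      have c1 := congrArg (fun x : ℕ => (x : ℝ)) i1
      have c2 := congrArg (fun x : ℕ => (x : ℝ)) i2
      beta_reduce at c1 c2
      push_cast at c1 c2 ⊢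
      have e2 : k + 1 + 1 = k + 2 := by ring
      nlinarith [c1, c2]
    have II : (Nat.choose (k + 2 + a + 1) (k + 2) : ℝ) * ((k + 2 + a + 2) * (a + 1)) =
        Nat.choose (k + 2 + a + 2) (k + 4) * ((k + 3) * (k + 4)) := by
      have i1 := Nat.add_one_mul_choose_eq (k + 2 + a + 1) (k + 2)
      have i2 := Nat.choose_succ_right_eq (k + 2 + a + 2) (k + 3)
      have e : k + 2 + a + 2 - (k + 3) = a + 1 := by omega
      rw [e] at i2
      have c1 := congrArg (fun x : ℕ => (x : ℝ)) i1
      have c2 := congrArg (fun x : ℕ => (x : ℝ)) i2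
      beta_reduce at c1 c2
      push_cast at c1 c2 ⊢
      have e3 : k + 2 + 1 = k + 3 := by ring
      have e4 : k + 3 + 1 = k + 4 := by ring
      nlinarith [c1, c2]
    set A : ℝ := ((Nat.choose (k + 2 + a) k : ℕ) : ℝ)
    set B : ℝ := ((Nat.choose (k + 2 + a + 1) (k + 2) : ℕ) : ℝ)
    set C : ℝ := ((Nat.choose (k + 2 + a + 2) (k + 4) : ℕ) : ℝ)
    have hE : A * C * ((k + 2 + a + 1 : ℝ) * (a + 2) * ((k + 3) * (k + 4))) =
        B ^ 2 * ((k + 1) * (k + 2) * ((k + 2 + a + 2 : ℝ) * (a + 1))) := by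
      linear_combination (C * ((k + 3 : ℝ) * (k + 4))) * I - (B * ((k + 1 : ℝ) * (k + 2))) * II
    have hF : ((k : ℝ) + 1) * (k + 2) * ((k + 2 + a + 2 : ℝ) * (a + 1)) ≤
        (k + 2 + a + 1 : ℝ) * (a + 2) * ((k + 3) * (k + 4)) := by
      have hk : (0:ℝ) ≤ (k:ℝ) := Nat.cast_nonneg k
      have ha : (0:ℝ) ≤ (a:ℝ) := Nat.cast_nonneg a
      have g1 : ((k:ℝ) + 1) * (k + 2) ≤ ((k:ℝ) + 3) * (k + 4) := by nlinarith
      have g2 : ((k:ℝ) + 2 + a + 2) * (a + 1) ≤ ((k:ℝ) + 2 + a + 1) * (a + 2) := by nlinarith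
      calc ((k : ℝ) + 1) * (k + 2) * (((k:ℝ) + 2 + a + 2) * (a + 1))
          ≤ ((k:ℝ) + 3) * (k + 4) * (((k:ℝ) + 2 + a + 1) * (a + 2)) := by
            apply mul_le_mul g1 g2 (by positivity) (by positivity)
        _ = ((k:ℝ) + 2 + a + 1) * (a + 2) * (((k:ℝ) + 3) * (k + 4)) := by ring
    have hBsq : (0 : ℝ) ≤ B ^ 2 := by positivity
    have hpos : (0 : ℝ) < (k + 2 + a + 1 : ℝ) * (a + 2) * ((k + 3) * (k + 4)) := by positivity
    have : A * C * ((k + 2 + a + 1 : ℝ) * (a + 2) * ((k + 3) * (k + 4))) ≤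
        B ^ 2 * ((k + 2 + a + 1 : ℝ) * (a + 2) * ((k + 3) * (k + 4))) := by
      rw [hE]; exact mul_le_mul_of_nonneg_left hF hBsq
    exact le_of_mul_le_mul_right this hpos

/-- The double sequence `a_{n,m} = C(n+m-1, 2m-1)` for `1 ≤ m ≤ n`, else `0`. -/
noncomputable def aBin (n m : ℕ) : ℝ :=
  if 1 ≤ m ∧ m ≤ n then (Nat.choose (n + m - 1) (2 * m - 1) : ℝ) else 0

lemma aBin_nonneg (n m : ℕ) : 0 ≤ aBin n m := by
  unfold aBin; split <;> positivity

/-- The double sequence `C(n+m-1, 2m-1)` (supported on `1 ≤ m ≤ n`) is horizontally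
and vertically log-concave. -/
theorem binomial_double_sequence_logConcave :
    (∀ n m : ℕ, 1 ≤ n → 1 ≤ m →
      aBin n m ^ 2 ≥ aBin n (m - 1) * aBin n (m + 1)) ∧
    (∀ n m : ℕ, 1 ≤ m → 2 ≤ n →
      aBin n m ^ 2 ≥ aBin (n - 1) m * aBin (n + 1) m) := by
  constructor
  · intro n m hn hm
    by_cases h : 2 ≤ m ∧ m + 1 ≤ n
    · obtain ⟨hm2, hmn⟩ := h
      obtain ⟨m', rfl⟩ : ∃ m', m = m' + 2 := ⟨m - 2, by omega⟩
      have key := horiz_key (n + m') (2 * m' + 1)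
      have e1 : n + (m' + 2 - 1) - 1 = n + m' := by omega
      have e2 : 2 * (m' + 2 - 1) - 1 = 2 * m' + 1 := by omega
      have e3 : n + (m' + 2) - 1 = n + m' + 1 := by omega
      have e4 : 2 * (m' + 2) - 1 = 2 * m' + 1 + 2 := by omega
      have e5 : n + (m' + 2 + 1) - 1 = n + m' + 2 := by omega
      have e6 : 2 * (m' + 2 + 1) - 1 = 2 * m' + 1 + 4 := by omega
      unfold aBin
      rw [if_pos (by omega : 1 ≤ m' + 2 - 1 ∧ m' + 2 - 1 ≤ n),
        if_pos (by omega : 1 ≤ m' + 2 ∧ m' + 2 ≤ n),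
        if_pos (by omega : 1 ≤ m' + 2 + 1 ∧ m' + 2 + 1 ≤ n),
        e1, e2, e3, e4, e5, e6]
      exact key
    · have hz : aBin n (m - 1) = 0 ∨ aBin n (m + 1) = 0 := by
        unfold aBin
        rcases (by omega : m < 2 ∨ n < m + 1) with h' | h'
        · left; rw [if_neg (by omega)]
        · right; rw [if_neg (by omega)]
      rcases hz with hz | hz <;> rw [hz] <;>
        first
          | (rw [zero_mul]; positivity)
          | (rw [mul_zero]; positivity)
  · intro n m hm hn
    by_cases h : m + 1 ≤ n
    · have key := vert_key (n + m - 2) (2 * m - 1)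
      have e1 : n - 1 + m - 1 = n + m - 2 := by omega
      have e2 : n + m - 1 = n + m - 2 + 1 := by omega
      have e3 : n + 1 + m - 1 = n + m - 2 + 2 := by omega
      unfold aBin
      rw [if_pos (by omega : 1 ≤ m ∧ m ≤ n - 1),
        if_pos (by omega : 1 ≤ m ∧ m ≤ n),
        if_pos (by omega : 1 ≤ m ∧ m ≤ n + 1),
        e1, e2, e3]
      exact key
    · have hz : aBin (n - 1) m = 0 := by
        unfold aBin; rw [if_neg (by omega)]
      rw [hz, zero_mul]; positivity
end

section
/- The double sequences A^{id,1} and A^{s,id} are both horizontally and vertically log-concave: for every fixed n ≥ 1 and every m ≥ 1, (A_{n,m}^{g,h})² ≥ A_{n,m−1}^{g,h}·A_{n,m+1}^{g,h}, and for every fixed m ≥ 1 and every n ≥ 2, (A_{n,m}^{g,h})² ≥ A_{n−1,m}^{g,h}·A_{n+1,m}^{g,h}, for (g,h) = (id,1) and for (g,h) = (s,id). -/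
open Finset Polynomial


lemma myHS (a b : ℕ) (hab : a < b + 1) :
    ∀ n, ∑ j ∈ range n, (j + a).choose b = (n + a).choose (b + 1) := by
  intro n
  induction n with
  | zero => simp [Nat.choose_eq_zero_of_lt hab]
  | succ n ih =>
      rw [Finset.sum_range_succ, ih]
      rw [show n + 1 + a = (n + a) + 1 from by omega, Nat.choose_succ_succ']
      omega

lemma myID1 (t : ℕ) : ∀ N, ∑ i ∈ range N, (N - i) * (i + t).choose (2*t+1)
    = (N + t + 1).choose (2*t + 3) := by
  intro N
  induction N with
  | zero => simp [Nat.choose_eq_zero_of_lt (by omega : t + 1 < 2*t+3)]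
  | succ N ih =>
      have step : ∀ i ∈ range (N+1), (N + 1 - i) * (i + t).choose (2*t+1)
          = (N - i) * (i + t).choose (2*t+1) + (i + t).choose (2*t+1) := by
        intro i hi
        have : i ≤ N := by simpa [Nat.lt_succ_iff] using hi
        have h : N + 1 - i = (N - i) + 1 := by omega
        rw [h, add_mul, one_mul]
      rw [Finset.sum_congr rfl step, Finset.sum_add_distrib, Finset.sum_range_succ,
        Nat.sub_self, zero_mul, add_zero, ih]
      have h1 : ∑ i ∈ range (N+1), (i + t).choose (2*t+1) = (N+t+1).choose (2*t+2) := by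
        rw [myHS t (2*t+1) (by omega) (N+1)]
        congr 1 <;> omega
      have h2 : (N+1+t+1).choose (2*t+3) = (N+t+1).choose (2*t+2) + (N+t+1).choose (2*t+3) := by
        rw [show N+1+t+1 = (N+t+1)+1 from by omega, show 2*t+3 = (2*t+2)+1 from by omega,
          Nat.choose_succ_succ']
      rw [h1]
      omega

lemma myID2 (t : ℕ) : ∀ N, (t+2) * ∑ i ∈ range N, (N - i)^2 * (i + t).choose (2*t+1)
    = N * (N + t + 1).choose (2*t + 3) := by
  intro N
  induction N with
  | zero => simp
  | succ N ih =>
      set A := (N + t + 1).choose (2*t+3) with hAdef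
      set B := (N + t + 1).choose (2*t+2) with hBdef
      have hA : A * (2*t+3) = B * (N - t - 1) := by
        have h := Nat.choose_succ_right_eq (N+t+1) (2*t+2)
        rw [show 2*t+2+1 = 2*t+3 from by omega,
          show N+t+1-(2*t+2) = N - t - 1 from by omega] at h
        exact h
      have hL : ∑ i ∈ range (N+1), (N + 1 - i) * (i + t).choose (2*t+1) = B + A := by
        rw [myID1 t (N+1), show N+1+t+1 = (N+t+1)+1 from by omega,
          show 2*t+3 = (2*t+2)+1 from by omega, Nat.choose_succ_succ']
      have hH : ∑ i ∈ range (N+1), (i + t).choose (2*t+1) = B := by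
        rw [myHS t (2*t+1) (by omega) (N+1)]
        congr 1 <;> omega
      have key : (∑ i ∈ range (N+1), (N + 1 - i)^2 * (i + t).choose (2*t+1))
          + ∑ i ∈ range (N+1), (i + t).choose (2*t+1)
          = (∑ i ∈ range N, (N - i)^2 * (i + t).choose (2*t+1))
          + 2 * ∑ i ∈ range (N+1), (N + 1 - i) * (i + t).choose (2*t+1) := by
        have e1 : (∑ i ∈ range (N+1), (N + 1 - i)^2 * (i + t).choose (2*t+1))
            + ∑ i ∈ range (N+1), (i + t).choose (2*t+1)
            = ∑ i ∈ range (N+1), ((N - i)^2 * (i + t).choose (2*t+1)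
                + 2 * ((N + 1 - i) * (i + t).choose (2*t+1))) := by
          rw [← Finset.sum_add_distrib]
          apply Finset.sum_congr rfl
          intro i hi
          have hiN : i ≤ N := by simpa [Nat.lt_succ_iff] using hi
          have h : N + 1 - i = (N - i) + 1 := by omega
          rw [h]; ring
        rw [e1, Finset.sum_add_distrib, ← Finset.mul_sum,
          Finset.sum_range_succ (fun i => (N - i)^2 * (i + t).choose (2*t+1)),
          Nat.sub_self]
        simp
      have hBA : N * B = (2*t+3) * A + (t+1) * B := by
        rcases le_or_gt (t+1) N with h | h
        · obtain ⟨d, rfl⟩ : ∃ d, N = t + 1 + d := ⟨N - (t+1), by omega⟩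
          rw [show t + 1 + d - t - 1 = d from by omega] at hA
          zify at hA ⊢
          linear_combination -hA
        · have hA0 : A = 0 := by
            rw [hAdef]; exact Nat.choose_eq_zero_of_lt (by omega)
          have hB0 : B = 0 := by
            rw [hBdef]; exact Nat.choose_eq_zero_of_lt (by omega)
          simp [hA0, hB0]
      have goal' : (N + 1 + t + 1).choose (2*t+3) = B + A := by
        rw [show N+1+t+1 = (N+t+1)+1 from by omega,
          show 2*t+3 = (2*t+2)+1 from by omega, Nat.choose_succ_succ']
      rw [goal']
      zify at key ih hL hH hA hBA ⊢
      linear_combination (t+2:ℤ) * key - (t+2:ℤ) * hH + ih + 2*(t+2:ℤ)*hL - hBA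


lemma myV (N r : ℕ) : N.choose r * (N+2).choose r ≤ ((N+1).choose r)^2 := by
  rcases le_or_gt r (N+1) with h | h
  · obtain ⟨e, he⟩ : ∃ e, N + 1 = r + e := ⟨N + 1 - r, by omega⟩
    have E1 : N.choose r * (N+1) = (N+1).choose r * e := by
      have := Nat.choose_mul_succ_eq N r
      rw [show N + 1 - r = e from by omega] at this
      exact this
    have E2 : (N+1).choose r * (N+2) = (N+2).choose r * (e+1) := by
      have := Nat.choose_mul_succ_eq (N+1) r
      rw [show N + 1 + 1 - r = e + 1 from by omega, show N+1+1 = N+2 from rfl] at this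
      exact this
    have key : N.choose r * (N+2).choose r * ((N+1)*(e+1))
        = ((N+1).choose r)^2 * (e*(N+2)) := by
      calc N.choose r * (N+2).choose r * ((N+1)*(e+1))
          = (N.choose r * (N+1)) * ((N+2).choose r * (e+1)) := by ring
        _ = ((N+1).choose r * e) * ((N+2).choose r * (e+1)) := by rw [E1]
        _ = ((N+1).choose r * e) * ((N+1).choose r * (N+2)) := by rw [← E2]
        _ = ((N+1).choose r)^2 * (e*(N+2)) := by ring
    have hle : e*(N+2) ≤ (N+1)*(e+1) := by nlinarith [he]
    have h2 : N.choose r * (N+2).choose r * ((N+1)*(e+1))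
        ≤ ((N+1).choose r)^2 * ((N+1)*(e+1)) := by
      rw [key]
      exact Nat.mul_le_mul_left _ hle
    exact Nat.le_of_mul_le_mul_right h2 (by positivity)
  · have : N.choose r = 0 := Nat.choose_eq_zero_of_lt (by omega)
    simp [this]

lemma myH (n t : ℕ) : (n+t).choose (2*t+1) * (n+t+2).choose (2*t+5)
    ≤ ((n+t+1).choose (2*t+3))^2 := by
  rcases le_or_gt (t+2) n with h | h
  · obtain ⟨s, rfl⟩ : ∃ s, n = s + t + 2 := ⟨n - t - 2, by omega⟩
    set W := (s+t+2+t).choose (2*t+1) with hW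
    set X := (s+t+2+t+1).choose (2*t+3) with hX
    set V := (s+t+2+t+2).choose (2*t+5) with hV
    set Z := (s+t+2+t+1).choose (2*t+1) with hZ
    set Y := (s+t+2+t+1).choose (2*t+2) with hY
    set U := (s+t+2+t+2).choose (2*t+4) with hU
    set T := (s+t+2+t+2).choose (2*t+3) with hT
    have e1 : W * (s+2*t+3) = Z * (s+2) := by
      have := Nat.choose_mul_succ_eq (s+t+2+t) (2*t+1)
      rw [show s+t+2+t+1-(2*t+1) = s+2 from by omega] at this
      rw [show s+2*t+3 = s+t+2+t+1 from by omega]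
      exact this
    have e2 : Y * (2*t+2) = Z * (s+2) := by
      have := Nat.choose_succ_right_eq (s+t+2+t+1) (2*t+1)
      rw [show 2*t+1+1 = 2*t+2 from by omega,
        show s+t+2+t+1-(2*t+1) = s+2 from by omega] at this
      exact this
    have e3 : X * (2*t+3) = Y * (s+1) := by
      have := Nat.choose_succ_right_eq (s+t+2+t+1) (2*t+2)
      rw [show 2*t+2+1 = 2*t+3 from by omega,
        show s+t+2+t+1-(2*t+2) = s+1 from by omega] at this
      exact this
    have e4 : V * (2*t+5) = U * s := by
      have := Nat.choose_succ_right_eq (s+t+2+t+2) (2*t+4)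
      rw [show 2*t+4+1 = 2*t+5 from by omega,
        show s+t+2+t+2-(2*t+4) = s from by omega] at this
      exact this
    have e5 : U * (2*t+4) = T * (s+1) := by
      have := Nat.choose_succ_right_eq (s+t+2+t+2) (2*t+3)
      rw [show 2*t+3+1 = 2*t+4 from by omega,
        show s+t+2+t+2-(2*t+3) = s+1 from by omega] at this
      exact this
    have e6 : X * (s+2*t+4) = T * (s+1) := by
      have := Nat.choose_mul_succ_eq (s+t+2+t+1) (2*t+3)
      rw [show s+t+2+t+1+1-(2*t+3) = s+1 from by omega] at this
      rw [show s+2*t+4 = s+t+2+t+1+1 from by omega]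
      exact this
    have c1 : W * ((s+2*t+3)*(s+1)) = X * ((2*t+3)*(2*t+2)) := by
      calc W * ((s+2*t+3)*(s+1)) = (W * (s+2*t+3)) * (s+1) := by ring
        _ = (Z * (s+2)) * (s+1) := by rw [e1]
        _ = (Y * (2*t+2)) * (s+1) := by rw [e2]
        _ = (Y * (s+1)) * (2*t+2) := by ring
        _ = (X * (2*t+3)) * (2*t+2) := by rw [e3]
        _ = X * ((2*t+3)*(2*t+2)) := by ring
    have c2 : V * ((2*t+5)*(2*t+4)) = X * ((s+2*t+4)*s) := by
      calc V * ((2*t+5)*(2*t+4)) = (V * (2*t+5)) * (2*t+4) := by ring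
        _ = (U * s) * (2*t+4) := by rw [e4]
        _ = (U * (2*t+4)) * s := by ring
        _ = (T * (s+1)) * s := by rw [e5]
        _ = (X * (s+2*t+4)) * s := by rw [e6]
        _ = X * ((s+2*t+4)*s) := by ring
    have hfac : (2*t+3)*(2*t+2)*((s+2*t+4)*s) ≤ (s+2*t+3)*(s+1)*((2*t+5)*(2*t+4)) := by
      have f1 : (2*t+3)*(2*t+2) ≤ (2*t+5)*(2*t+4) := by nlinarith
      have f2 : (s+2*t+4)*s ≤ (s+2*t+3)*(s+1) := by nlinarith
      calc (2*t+3)*(2*t+2)*((s+2*t+4)*s) ≤ ((2*t+5)*(2*t+4))*((s+2*t+3)*(s+1)) :=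
            Nat.mul_le_mul f1 f2
        _ = (s+2*t+3)*(s+1)*((2*t+5)*(2*t+4)) := by ring
    have key : W * V * ((s+2*t+3)*(s+1)*((2*t+5)*(2*t+4)))
        = X^2 * ((2*t+3)*(2*t+2)*((s+2*t+4)*s)) := by
      calc W * V * ((s+2*t+3)*(s+1)*((2*t+5)*(2*t+4)))
          = (W * ((s+2*t+3)*(s+1))) * (V * ((2*t+5)*(2*t+4))) := by ring
        _ = (X * ((2*t+3)*(2*t+2))) * (X * ((s+2*t+4)*s)) := by rw [c1, c2]
        _ = X^2 * ((2*t+3)*(2*t+2)*((s+2*t+4)*s)) := by ring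
    have h2 : W * V * ((s+2*t+3)*(s+1)*((2*t+5)*(2*t+4)))
        ≤ X^2 * ((s+2*t+3)*(s+1)*((2*t+5)*(2*t+4))) := by
      rw [key]
      exact Nat.mul_le_mul_left _ hfac
    exact Nat.le_of_mul_le_mul_right h2 (by positivity)
  · have : (n+t+2).choose (2*t+5) = 0 := Nat.choose_eq_zero_of_lt (by omega)
    simp [this]

lemma hvp_succ (g h : ℕ → ℝ) (n : ℕ) : HVP g h (n+1) =
    Polynomial.C (h (n + 1))⁻¹ * Polynomial.X *
      ∑ k ∈ Finset.Icc 1 (n + 1), Polynomial.C (g k) * HVP g h (n + 1 - k) := by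
  rw [HVP]
  congr 1
  exact Finset.sum_attach (Finset.Icc 1 (n + 1)) (fun k => Polynomial.C (g k) * HVP g h (n + 1 - k))

lemma hvp_coeff_zero (g h : ℕ → ℝ) (n : ℕ) : (HVP g h (n+1)).coeff 0 = 0 := by
  rw [hvp_succ, Polynomial.coeff_zero_eq_eval_zero]
  simp

lemma hvp_coeff_succ (g h : ℕ → ℝ) (n m : ℕ) : (HVP g h (n+1)).coeff (m+1) =
    (h (n + 1))⁻¹ * ∑ k ∈ Finset.Icc 1 (n + 1), g k * (HVP g h (n + 1 - k)).coeff m := by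
  rw [hvp_succ, mul_assoc, Polynomial.coeff_C_mul, Polynomial.coeff_X_mul,
    Polynomial.finset_sum_coeff]
  simp [Polynomial.coeff_C_mul]

lemma hvp_zero (g h : ℕ → ℝ) : HVP g h 0 = 1 := by rw [HVP]

lemma reindex (N e : ℕ) (f : ℕ → ℕ) :
    ∑ k ∈ Icc 1 N, k^e * f (N - k) = ∑ i ∈ range N, (N - i)^e * f i := by
  calc ∑ k ∈ Icc 1 N, k^e * f (N-k)
      = ∑ i ∈ range N, (1+i)^e * f (N - (1+i)) := by
        rw [← Finset.Ico_add_one_right_eq_Icc, Finset.sum_Ico_eq_sum_range]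
        simp
    _ = ∑ i ∈ range N, (N-i)^e * f i := by
        rw [← Finset.sum_range_reflect]
        apply Finset.sum_congr rfl
        intro i hi
        have hiN : i < N := Finset.mem_range.mp hi
        congr 2
        · omega
        · omega

lemma cf1 (n : ℕ) : ∀ m : ℕ,
    (HVP (fun k => (k:ℝ)) (fun _ => 1) (n+1)).coeff (m+1)
      = ((n + m + 1).choose (2*m+1) : ℝ) := by
  induction n using Nat.strong_induction_on with
  | _ n ih =>
    intro m
    rw [hvp_coeff_succ]
    simp only [inv_one, one_mul]
    match m with
    | 0 =>
      rw [Finset.sum_eq_single_of_mem (n+1) (by simp)]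
      · rw [Nat.sub_self, hvp_zero]
        simp
      · intro k hk hkne
        have hk' : 1 ≤ k ∧ k ≤ n := by
          have := Finset.mem_Icc.mp hk
          omega
        rw [show n + 1 - k = (n - k) + 1 from by omega, hvp_coeff_zero, mul_zero]
    | m' + 1 =>
      have hcong : ∀ k ∈ Icc 1 (n+1), (k:ℝ) *
          (HVP (fun k => (k:ℝ)) (fun _ => 1) (n+1-k)).coeff (m'+1)
          = ((k * (((n+1-k) + m').choose (2*m'+1)) : ℕ) : ℝ) := by
        intro k hk
        have hk' : 1 ≤ k ∧ k ≤ n + 1 := Finset.mem_Icc.mp hk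
        push_cast
        rcases eq_or_lt_of_le hk'.2 with heq | hlt
        · rw [heq, Nat.sub_self, hvp_zero]
          simp [Polynomial.coeff_one, Nat.choose_eq_zero_of_lt (by omega : m' < 2*m'+1)]
        · have hkn : k ≤ n := by omega
          rw [show n + 1 - k = (n - k) + 1 from by omega, ih (n-k) (by omega) m',
            show n - k + m' + 1 = n - k + 1 + m' from by omega]
      rw [Finset.sum_congr rfl hcong, ← Nat.cast_sum]
      have h2 : ∑ k ∈ Icc 1 (n+1), k * (((n+1-k) + m').choose (2*m'+1))
          = ∑ k ∈ Icc 1 (n+1), k^1 * ((fun i => (i + m').choose (2*m'+1)) (n+1-k)) := by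
        simp
      rw [h2, reindex (n+1) 1 (fun i => (i + m').choose (2*m'+1))]
      have hid := myID1 m' (n+1)
      simp only [pow_one] at hid ⊢
      rw [show (∑ i ∈ range (n+1), (n+1-i) * (i + m').choose (2*m'+1))
          = (n+1+m'+1).choose (2*m'+3) from hid]
      congr 2 <;> omega

lemma cf2 (n : ℕ) : ∀ m : ℕ,
    (HVP (fun k => (k:ℝ)^2) (fun k => (k:ℝ)) (n+1)).coeff (m+1)
      = ((n + m + 1).choose (2*m+1) : ℝ) / (Nat.factorial (m+1)) := by
  induction n using Nat.strong_induction_on with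
  | _ n ih =>
    intro m
    rw [hvp_coeff_succ]
    have hn1 : ((n:ℝ) + 1) ≠ 0 := by positivity
    match m with
    | 0 =>
      rw [Finset.sum_eq_single_of_mem (n+1) (by simp)]
      · rw [Nat.sub_self, hvp_zero]
        push_cast
        simp only [Polynomial.coeff_one, if_pos rfl, mul_one, Nat.choose_one_right]
        rw [Nat.factorial_one]
        push_cast
        field_simp
        ring
      · intro k hk hkne
        have hk' : 1 ≤ k ∧ k ≤ n := by
          have := Finset.mem_Icc.mp hk
          omega
        rw [show n + 1 - k = (n - k) + 1 from by omega, hvp_coeff_zero, mul_zero]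
    | m' + 1 =>
      have hcong : ∀ k ∈ Icc 1 (n+1), ((k:ℝ))^2 *
          (HVP (fun k => (k:ℝ)^2) (fun k => (k:ℝ)) (n+1-k)).coeff (m'+1)
          = ((k^2 * (((n+1-k) + m').choose (2*m'+1)) : ℕ) : ℝ) / (Nat.factorial (m'+1)) := by
        intro k hk
        have hk' : 1 ≤ k ∧ k ≤ n + 1 := Finset.mem_Icc.mp hk
        push_cast
        rcases eq_or_lt_of_le hk'.2 with heq | hlt
        · rw [heq, Nat.sub_self, hvp_zero]
          simp [Polynomial.coeff_one, Nat.choose_eq_zero_of_lt (by omega : m' < 2*m'+1)]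
        · have hkn : k ≤ n := by omega
          rw [show n + 1 - k = (n - k) + 1 from by omega, ih (n-k) (by omega) m',
            show n - k + m' + 1 = n - k + 1 + m' from by omega]
          ring
      rw [Finset.sum_congr rfl hcong, ← Finset.sum_div, ← Nat.cast_sum,
        reindex (n+1) 2 (fun i => (i + m').choose (2*m'+1))]
      have hid := myID2 m' (n+1)
      have hidR : ((m':ℝ)+2) * (∑ i ∈ range (n+1), ((n+1-i)^2 * (i + m').choose (2*m'+1) : ℕ) : ℝ)
          = ((n:ℝ)+1) * ((n+m'+2).choose (2*m'+3) : ℝ) := by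
        have := congrArg (fun x : ℕ => (x : ℝ)) hid
        push_cast at this ⊢
        rw [show n+1+m'+1 = n+m'+2 from by omega] at this
        convert this using 2 <;> push_cast <;> ring
      have hfact : ((Nat.factorial (m'+1+1)) : ℝ) = ((m':ℝ)+2) * ((Nat.factorial (m'+1)) : ℝ) := by
        rw [Nat.factorial_succ]
        push_cast
        ring
      rw [show n + (m'+1) + 1 = n + m' + 2 from by omega,
        show 2*(m'+1)+1 = 2*m'+3 from by omega, hfact]
      have hm2 : ((m':ℝ)+2) ≠ 0 := by positivity
      have hfac : ((Nat.factorial (m'+1)) : ℝ) ≠ 0 := by positivity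
      field_simp
      push_cast at hidR ⊢
      linear_combination hidR


lemma hva_zero' (g h : ℕ → ℝ) (n : ℕ) (hn : 1 ≤ n) : HVA g h n 0 = 0 := by
  obtain ⟨a, rfl⟩ : ∃ a, n = a + 1 := ⟨n - 1, by omega⟩
  simp only [HVA]
  exact hvp_coeff_zero g h a

lemma hva1 (n m : ℕ) (hn : 1 ≤ n) (hm : 1 ≤ m) :
    HVA (fun k => (k:ℝ)) (fun _ => 1) n m = ((n + m - 1).choose (2*m - 1) : ℝ) := by
  obtain ⟨a, rfl⟩ : ∃ a, n = a + 1 := ⟨n - 1, by omega⟩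
  obtain ⟨b, rfl⟩ : ∃ b, m = b + 1 := ⟨m - 1, by omega⟩
  simp only [HVA]
  rw [cf1 a b]
  congr 2 <;> omega

lemma hva2 (n m : ℕ) (hn : 1 ≤ n) (hm : 1 ≤ m) :
    HVA (fun k => (k:ℝ)^2) (fun k => (k:ℝ)) n m
      = ((n + m - 1).choose (2*m - 1) : ℝ) / (Nat.factorial m) := by
  obtain ⟨a, rfl⟩ : ∃ a, n = a + 1 := ⟨n - 1, by omega⟩
  obtain ⟨b, rfl⟩ : ∃ b, m = b + 1 := ⟨m - 1, by omega⟩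
  simp only [HVA]
  rw [cf2 a b]
  congr 3 <;> omega

/-- The double sequences `A^{id,1}` and `A^{s,id}` (with `s(n) = n²`) are both
horizontally and vertically log-concave. -/
theorem A_id_one_and_A_s_id_logConcave :
    (∀ n m : ℕ, 1 ≤ n → 1 ≤ m →
      HVA (fun k => (k : ℝ)) (fun _ => 1) n m ^ 2 ≥
        HVA (fun k => (k : ℝ)) (fun _ => 1) n (m - 1) *
          HVA (fun k => (k : ℝ)) (fun _ => 1) n (m + 1)) ∧
    (∀ n m : ℕ, 1 ≤ m → 2 ≤ n →
      HVA (fun k => (k : ℝ)) (fun _ => 1) n m ^ 2 ≥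
        HVA (fun k => (k : ℝ)) (fun _ => 1) (n - 1) m *
          HVA (fun k => (k : ℝ)) (fun _ => 1) (n + 1) m) ∧
    (∀ n m : ℕ, 1 ≤ n → 1 ≤ m →
      HVA (fun k => (k : ℝ) ^ 2) (fun k => (k : ℝ)) n m ^ 2 ≥
        HVA (fun k => (k : ℝ) ^ 2) (fun k => (k : ℝ)) n (m - 1) *
          HVA (fun k => (k : ℝ) ^ 2) (fun k => (k : ℝ)) n (m + 1)) ∧
    (∀ n m : ℕ, 1 ≤ m → 2 ≤ n →
      HVA (fun k => (k : ℝ) ^ 2) (fun k => (k : ℝ)) n m ^ 2 ≥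
        HVA (fun k => (k : ℝ) ^ 2) (fun k => (k : ℝ)) (n - 1) m *
          HVA (fun k => (k : ℝ) ^ 2) (fun k => (k : ℝ)) (n + 1) m) := by
  refine ⟨?_, ?_, ?_, ?_⟩
  · -- id,1 horizontal
    intro n m hn hm
    rcases Nat.lt_or_ge m 2 with hm2 | hm2
    · have hm1 : m = 1 := by omega
      subst hm1
      rw [show (1:ℕ) - 1 = 0 from rfl, hva_zero' _ _ n hn, zero_mul]
      positivity
    · obtain ⟨t, rfl⟩ : ∃ t, m = t + 2 := ⟨m - 2, by omega⟩
      rw [hva1 n (t+2) hn (by omega), hva1 n (t+2-1) hn (by omega),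
        hva1 n (t+2+1) hn (by omega)]
      rw [show n + (t+2) - 1 = n+t+1 from by omega, show 2*(t+2)-1 = 2*t+3 from by omega,
        show n + (t+2-1) - 1 = n+t from by omega, show 2*(t+2-1)-1 = 2*t+1 from by omega,
        show n + (t+2+1) - 1 = n+t+2 from by omega, show 2*(t+2+1)-1 = 2*t+5 from by omega]
      have h := myH n t
      calc ((n+t).choose (2*t+1) : ℝ) * ((n+t+2).choose (2*t+5) : ℝ)
          = (((n+t).choose (2*t+1) * (n+t+2).choose (2*t+5) : ℕ) : ℝ) := by push_cast; ring
        _ ≤ ((((n+t+1).choose (2*t+3))^2 : ℕ) : ℝ) := by exact_mod_cast h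
        _ = ((n+t+1).choose (2*t+3) : ℝ)^2 := by push_cast; ring
  · -- id,1 vertical
    intro n m hm hn
    rw [hva1 n m (by omega) hm, hva1 (n-1) m (by omega) hm, hva1 (n+1) m (by omega) hm]
    rw [show (n-1) + m - 1 = n + m - 2 from by omega,
      show n + 1 + m - 1 = (n + m - 2) + 2 from by omega,
      show n + m - 1 = (n + m - 2) + 1 from by omega]
    have h := myV (n + m - 2) (2*m - 1)
    calc ((n+m-2).choose (2*m-1) : ℝ) * (((n+m-2)+2).choose (2*m-1) : ℝ)
        = (((n+m-2).choose (2*m-1) * ((n+m-2)+2).choose (2*m-1) : ℕ) : ℝ) := by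
          push_cast; ring
      _ ≤ (((((n+m-2)+1).choose (2*m-1))^2 : ℕ) : ℝ) := by exact_mod_cast h
      _ = ((((n+m-2)+1).choose (2*m-1)) : ℝ)^2 := by push_cast; ring
  · -- s,id horizontal
    intro n m hn hm
    rcases Nat.lt_or_ge m 2 with hm2 | hm2
    · have hm1 : m = 1 := by omega
      subst hm1
      rw [show (1:ℕ) - 1 = 0 from rfl, hva_zero' _ _ n hn, zero_mul]
      positivity
    · obtain ⟨t, rfl⟩ : ∃ t, m = t + 2 := ⟨m - 2, by omega⟩
      rw [hva2 n (t+2) hn (by omega), hva2 n (t+2-1) hn (by omega),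
        hva2 n (t+2+1) hn (by omega)]
      rw [show n + (t+2) - 1 = n+t+1 from by omega, show 2*(t+2)-1 = 2*t+3 from by omega,
        show n + (t+2-1) - 1 = n+t from by omega, show 2*(t+2-1)-1 = 2*t+1 from by omega,
        show n + (t+2+1) - 1 = n+t+2 from by omega, show 2*(t+2+1)-1 = 2*t+5 from by omega,
        show t+2-1 = t+1 from by omega, show t+2+1 = t+3 from by omega]
      rw [ge_iff_le, div_mul_div_comm, div_pow, div_le_div_iff₀ (by positivity) (by positivity)]
      have h1 := myH n t
      have h2 : Nat.factorial (t+2) * Nat.factorial (t+2)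
          ≤ Nat.factorial (t+1) * Nat.factorial (t+3) := by
        rw [show t+2 = (t+1)+1 from rfl, show t+3 = ((t+1)+1)+1 from rfl]
        rw [Nat.factorial_succ ((t+1)+1), Nat.factorial_succ (t+1)]
        have : Nat.factorial (t+1) * ((t+2) * Nat.factorial (t+1)) * (t+2)
            ≤ Nat.factorial (t+1) * ((t+2) * Nat.factorial (t+1)) * (t+3) :=
          Nat.mul_le_mul_left _ (by omega)
        calc (t+1+1) * Nat.factorial (t+1) * ((t+1+1) * Nat.factorial (t+1))
            = Nat.factorial (t+1) * ((t+2) * Nat.factorial (t+1)) * (t+2) := by ring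
          _ ≤ Nat.factorial (t+1) * ((t+2) * Nat.factorial (t+1)) * (t+3) := this
          _ = Nat.factorial (t+1) * ((t+1+1+1) * ((t+1+1) * Nat.factorial (t+1))) := by ring
      calc ((n+t).choose (2*t+1) : ℝ) * ((n+t+2).choose (2*t+5) : ℝ)
            * ((Nat.factorial (t+2) : ℝ))^2
          = ((((n+t).choose (2*t+1) * (n+t+2).choose (2*t+5))
              * (Nat.factorial (t+2) * Nat.factorial (t+2)) : ℕ) : ℝ) := by push_cast; ring
        _ ≤ (((((n+t+1).choose (2*t+3))^2
              * (Nat.factorial (t+1) * Nat.factorial (t+3)) : ℕ)) : ℝ) := by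
            exact_mod_cast Nat.mul_le_mul h1 h2
        _ = ((n+t+1).choose (2*t+3) : ℝ)^2
              * ((Nat.factorial (t+1) : ℝ) * (Nat.factorial (t+3) : ℝ)) := by push_cast; ring
  · -- s,id vertical
    intro n m hm hn
    rw [hva2 n m (by omega) hm, hva2 (n-1) m (by omega) hm, hva2 (n+1) m (by omega) hm]
    rw [show (n-1) + m - 1 = n + m - 2 from by omega,
      show n + 1 + m - 1 = (n + m - 2) + 2 from by omega,
      show n + m - 1 = (n + m - 2) + 1 from by omega]
    rw [ge_iff_le, div_mul_div_comm, div_pow, div_le_div_iff₀ (by positivity) (by positivity)]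
    have h := myV (n + m - 2) (2*m - 1)
    calc ((n+m-2).choose (2*m-1) : ℝ) * (((n+m-2)+2).choose (2*m-1) : ℝ)
          * ((Nat.factorial m : ℝ))^2
        = (((n+m-2).choose (2*m-1) * ((n+m-2)+2).choose (2*m-1)
            * (Nat.factorial m * Nat.factorial m) : ℕ) : ℝ) := by push_cast; ring
      _ ≤ ((((((n+m-2)+1).choose (2*m-1))^2 * (Nat.factorial m * Nat.factorial m) : ℕ)) : ℝ) := by
          exact_mod_cast Nat.mul_le_mul h (le_refl _)
      _ = ((((n+m-2)+1).choose (2*m-1)) : ℝ)^2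
            * ((Nat.factorial m : ℝ) * (Nat.factorial m : ℝ)) := by push_cast; ring
end

section
/- For every integer n ≥ 5 one has (n²−1)·H(n−1)² < n²·H(n)·H(n−2), where H(k) = ∑_{j=1}^k 1/j is the k-th harmonic number. Equivalently, the vertical log-concavity inequality for A^{1,id} at m = 2 fails for all n ≥ 5: (H(n−1)/n)² < (H(n)/(n+1))·(H(n−2)/(n−1)). -/
lemma harmonic_key : ∀ n : ℕ, 5 ≤ n →
    1 ≤ harmonic (n - 1) ∧
    (n : ℚ) * harmonic (n - 1) + n < ((n : ℚ) - 1) * harmonic (n - 1) ^ 2 := by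
  intro n hn
  induction n, hn using Nat.le_induction with
  | base =>
    norm_num [show (5:ℕ) - 1 = 4 from rfl, harmonic_succ, harmonic_zero]
  | succ n hn ih =>
    obtain ⟨h1, h2⟩ := ih
    have hn1 : 1 ≤ n := by omega
    have hpred : n - 1 + 1 = n := by omega
    have hH : harmonic (n + 1 - 1) = harmonic (n - 1) + 1 / (n : ℚ) := by
      have := harmonic_succ (n - 1)
      rw [hpred] at this
      simp only [Nat.add_sub_cancel, this]
      congr 1
      rw [← hpred]
      push_cast
      ring_nf
    have hn0 : (0:ℚ) < n := by positivity
    have hn5 : (5:ℚ) ≤ n := by exact_mod_cast hn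
    rw [hH]
    constructor
    · have : 0 ≤ 1 / (n:ℚ) := by positivity
      linarith
    · push_cast
      have key : (1 ≤ harmonic (n-1)) := h1
      have expand : ((n:ℚ)+1) * (harmonic (n-1) + 1/n) + (n+1)
          = (n:ℚ) * harmonic (n-1) + n + (harmonic (n-1) + 1/n + 2) := by
        field_simp
        ring
      have expand2 : ((n:ℚ)+1-1) * (harmonic (n-1) + 1/n)^2
          = ((n:ℚ)-1) * harmonic (n-1)^2 + (harmonic (n-1)^2 + 2*harmonic (n-1) + 1/n) := by
        field_simp
        ring
      rw [expand, expand2]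
      have hHn : harmonic (n-1) / n ≤ harmonic (n-1) := by
        rw [div_le_iff₀ hn0]
        nlinarith
      have h1n : 1/(n:ℚ) ≤ 1 := by rw [div_le_one hn0]; linarith
      nlinarith [h2, key, hHn, h1n]

/-- For every `n ≥ 5` one has `(n²-1)·H(n-1)² < n²·H(n)·H(n-2)`; equivalently, the
vertical log-concavity inequality for `A^{1,id}` at `m = 2` fails for all `n ≥ 5`:
`(H(n-1)/n)² < (H(n)/(n+1))·(H(n-2)/(n-1))`. -/
theorem harmonic_vertical_fails_m_two (n : ℕ) (hn : 5 ≤ n) :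
    ((n : ℚ) ^ 2 - 1) * harmonic (n - 1) ^ 2 < (n : ℚ) ^ 2 * harmonic n * harmonic (n - 2) ∧
    (harmonic (n - 1) / (n : ℚ)) ^ 2
      < (harmonic n / ((n : ℚ) + 1)) * (harmonic (n - 2) / ((n : ℚ) - 1)) := by
  obtain ⟨h1, h2⟩ := harmonic_key n hn
  set H := harmonic (n - 1) with hHdef
  have hn0 : (0:ℚ) < n := by positivity
  have hn5 : (5:ℚ) ≤ n := by exact_mod_cast hn
  have hne : n - 1 + 1 = n := by omega
  have hne2 : n - 2 + 1 = n - 1 := by omega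
  have hHn : harmonic n = H + 1 / (n : ℚ) := by
    rw [hHdef, ← hne, harmonic_succ, hne]
    congr 1
    rw [← hne]; push_cast; ring_nf
  have hHn2 : H = harmonic (n - 2) + 1 / ((n : ℚ) - 1) := by
    rw [hHdef, ← hne2, harmonic_succ]
    congr 1
    have h2n : (2:ℕ) ≤ n := by omega
    have hc : ((n - 2 + 1 : ℕ) : ℚ) = (n:ℚ) - 1 := by push_cast [h2n]; ring
    rw [hc, one_div]
  have hHn2' : harmonic (n - 2) = H - 1 / ((n : ℚ) - 1) := by linarith
  have hn1 : (0:ℚ) < (n:ℚ) - 1 := by linarith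
  have first : ((n : ℚ) ^ 2 - 1) * H ^ 2 < (n : ℚ) ^ 2 * harmonic n * harmonic (n - 2) := by
    rw [hHn, hHn2']
    have expand : (n : ℚ) ^ 2 * (H + 1/n) * (H - 1/((n:ℚ)-1))
        = (n:ℚ)^2 * H^2 - (n * H + n) / ((n:ℚ)-1) := by
      field_simp
      ring
    rw [expand]
    have key : (n * H + n) / ((n:ℚ)-1) < H^2 := by
      rw [div_lt_iff₀ hn1]
      nlinarith [h2]
    nlinarith [key]
  refine ⟨first, ?_⟩
  have hpos1 : (0:ℚ) < (n:ℚ) + 1 := by linarith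
  rw [div_pow, div_mul_div_comm, div_lt_div_iff₀ (by positivity) (by positivity)]
  have : ((n:ℚ)+1) * ((n:ℚ)-1) = (n:ℚ)^2 - 1 := by ring
  calc H ^ 2 * (((n:ℚ) + 1) * ((n:ℚ) - 1)) = ((n:ℚ)^2 - 1) * H^2 := by ring
    _ < (n : ℚ) ^ 2 * harmonic n * harmonic (n - 2) := first
    _ = harmonic n * harmonic (n - 2) * (n:ℚ)^2 := by ring
end

section
/- For every fixed integer m ≥ 1, the sequence n ↦ S(n,m)/n! is eventually not log-concave: there exists N such that for all n ≥ N, (S(n,m)/n!)² < (S(n−1,m)/(n−1)!)·(S(n+1,m)/(n+1)!), where S(n,m) are the unsigned Stirling numbers of the first kind. -/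
/-- Unsigned Stirling numbers of the first kind: `x(x+1)⋯(x+n-1) = ∑_m S(n,m) x^m`. -/
noncomputable def stirlingFirst (n m : ℕ) : ℕ := (ascPochhammer ℕ n).coeff m

lemma stirlingFirst_zero_right {n : ℕ} (hn : 1 ≤ n) : stirlingFirst n 0 = 0 := by
  unfold stirlingFirst
  rw [Polynomial.coeff_zero_eq_eval_zero]
  exact ascPochhammer_ne_zero_eval_zero (S := ℕ) (Nat.one_le_iff_ne_zero.mp hn)

lemma stirlingFirst_rec (n j : ℕ) :
    stirlingFirst (n + 1) (j + 1) = n * stirlingFirst n (j + 1) + stirlingFirst n j := by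
  unfold stirlingFirst
  rw [ascPochhammer_succ_right, mul_add, Polynomial.coeff_add, Polynomial.coeff_mul_X,
    ← Polynomial.C_eq_natCast, Polynomial.coeff_mul_C]
  simp [Nat.cast_id]
  ring

lemma stirlingFirst_rec' (n j : ℕ) (hn : 1 ≤ n) :
    stirlingFirst (n + 1) j = n * stirlingFirst n j + stirlingFirst n (j - 1) := by
  cases j with
  | zero =>
      simp [stirlingFirst_zero_right (show 1 ≤ n + 1 by omega), stirlingFirst_zero_right hn]
  | succ j => simpa using stirlingFirst_rec n j

lemma stirlingFirst_pos : ∀ n m : ℕ, 1 ≤ m → m ≤ n → 0 < stirlingFirst n m := by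
  intro n
  induction n with
  | zero => intro m h1 h2; omega
  | succ n ih =>
    intro m h1 h2
    obtain ⟨j, rfl⟩ : ∃ j, m = j + 1 := ⟨m - 1, by omega⟩
    rw [stirlingFirst_rec]
    rcases Nat.lt_or_ge j n with h | h
    · have hp := ih (j + 1) (by omega) (by omega)
      have hn : 1 ≤ n := by omega
      exact Nat.lt_of_lt_of_le (Nat.mul_pos hn hp) (Nat.le_add_right _ _)
    · have hj : j = n := by omega
      subst hj
      rcases Nat.eq_zero_or_pos j with h0 | hp
      · subst h0; simp [stirlingFirst]
      · have := ih j hp le_rfl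
        omega

lemma stirling_ratio_large (j t : ℕ) :
    ∃ N : ℕ, ∀ n, N ≤ n → t * stirlingFirst n j ≤ stirlingFirst n (j + 1) := by
  induction j generalizing t with
  | zero =>
      exact ⟨1, fun n hn => by rw [stirlingFirst_zero_right hn]; simp⟩
  | succ j ih =>
    rcases Nat.eq_zero_or_pos t with rfl | ht
    · exact ⟨0, fun n _ => by simp⟩
    obtain ⟨N₀, hN₀⟩ := ih (2 * t)
    obtain ⟨N₁, hle0, hlej, hle1⟩ : ∃ N₁ : ℕ, N₀ ≤ N₁ ∧ j + 1 ≤ N₁ ∧ 1 ≤ N₁ :=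
      ⟨max N₀ (j + 1) + 1, by omega, by omega, by omega⟩
    have hb : ∀ n, N₁ ≤ n → 0 < stirlingFirst n (j + 1) := fun n hn =>
      stirlingFirst_pos n (j + 1) (by omega) (by omega)
    have hc : ∀ n, N₁ ≤ n → 2 * t * stirlingFirst n j ≤ stirlingFirst n (j + 1) :=
      fun n hn => hN₀ n (by omega)
    have hcb : ∀ n, N₁ ≤ n → stirlingFirst n j ≤ stirlingFirst n (j + 1) := by
      intro n hn
      refine le_trans ?_ (hc n hn)
      exact Nat.le_mul_of_pos_left _ (by omega)
    -- invariant step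
    have step : ∀ n, N₁ ≤ n → t * stirlingFirst n (j + 1) ≤ stirlingFirst n (j + 2) →
        t * stirlingFirst (n + 1) (j + 1) ≤ stirlingFirst (n + 1) (j + 2) := by
      intro n hn h
      rw [stirlingFirst_rec n (j + 1), stirlingFirst_rec n j]
      have h1 := hc n hn
      have h2 : t * stirlingFirst n j ≤ stirlingFirst n (j + 1) := by
        refine le_trans (Nat.mul_le_mul_right _ (by omega : t ≤ 2 * t)) h1
      calc t * (n * stirlingFirst n (j + 1) + stirlingFirst n j)
          = n * (t * stirlingFirst n (j + 1)) + t * stirlingFirst n j := by ring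
        _ ≤ n * stirlingFirst n (j + 2) + stirlingFirst n (j + 1) :=
            Nat.add_le_add (Nat.mul_le_mul_left _ h) h2
    -- existence of a starting point
    have hex : ∃ n₀, N₁ ≤ n₀ ∧ t * stirlingFirst n₀ (j + 1) ≤ stirlingFirst n₀ (j + 2) := by
      by_contra hcon
      push_neg at hcon
      set a : ℕ → ℝ := fun n => (stirlingFirst n (j + 2) : ℝ) with ha
      set b : ℕ → ℝ := fun n => (stirlingFirst n (j + 1) : ℝ) with hbdef
      have hbpos : ∀ n, N₁ ≤ n → (0 : ℝ) < b n := fun n hn => by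
        have := hb n hn; simp only [hbdef]; exact_mod_cast this
      have hstep : ∀ n, N₁ ≤ n →
          a n / b n + 1 / ((n : ℝ) + 1) / 2 ≤ a (n + 1) / b (n + 1) := by
        intro n hn
        have hb1 := hbpos n hn
        have hb2 := hbpos (n + 1) (by omega)
        have e1 : a (n + 1) = n * a n + b n := by
          simp only [ha, hbdef, stirlingFirst_rec n (j + 1)]
          push_cast; ring
        have e2 : b (n + 1) = n * b n + (stirlingFirst n j : ℝ) := by
          simp only [ha, hbdef, stirlingFirst_rec n j]
          push_cast; ring
        have hnumN : 2 * (stirlingFirst n (j + 2) * stirlingFirst n j)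
            ≤ stirlingFirst n (j + 1) * stirlingFirst n (j + 1) := by
          have h1 : stirlingFirst n (j + 2) ≤ t * stirlingFirst n (j + 1) :=
            le_of_lt (hcon n hn)
          have h2 := hc n hn
          calc 2 * (stirlingFirst n (j + 2) * stirlingFirst n j)
              ≤ 2 * ((t * stirlingFirst n (j + 1)) * stirlingFirst n j) := by
                exact Nat.mul_le_mul_left _ (Nat.mul_le_mul_right _ h1)
            _ = stirlingFirst n (j + 1) * (2 * t * stirlingFirst n j) := by ring
            _ ≤ stirlingFirst n (j + 1) * stirlingFirst n (j + 1) :=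
                Nat.mul_le_mul_left _ h2
        have hnum : 2 * (a n * (stirlingFirst n j : ℝ)) ≤ b n * b n := by
          simp only [ha, hbdef]; exact_mod_cast hnumN
        have hcb' : (stirlingFirst n j : ℝ) ≤ b n := by
          simp only [hbdef]; exact_mod_cast hcb n hn
        have hcnn : (0 : ℝ) ≤ (stirlingFirst n j : ℝ) := Nat.cast_nonneg _
        have hnn : (0 : ℝ) ≤ (n : ℝ) := Nat.cast_nonneg _
        rw [div_div, div_add_div _ _ (ne_of_gt hb1)
            (by positivity : ((n : ℝ) + 1) * 2 ≠ 0),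
          div_le_div_iff₀ (by positivity) hb2, e1, e2]
        nlinarith [mul_le_mul_of_nonneg_left hnum (by positivity : (0 : ℝ) ≤ (n : ℝ) + 1),
          mul_le_mul_of_nonneg_right hcb' hb1.le, hb1.le, sq_nonneg (b n),
          mul_nonneg hcnn hb1.le]
      have hacc : ∀ p : ℕ,
          a N₁ / b N₁ + (∑ i ∈ Finset.range p, 1 / ((N₁ + i : ℕ) + 1 : ℝ)) / 2
            ≤ a (N₁ + p) / b (N₁ + p) := by
        intro p
        induction p with
        | zero => simp
        | succ p ihp =>
          rw [Finset.sum_range_succ]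
          have h := hstep (N₁ + p) (by omega)
          show a N₁ / b N₁ + ((∑ i ∈ Finset.range p, 1 / ((N₁ + i : ℕ) + 1 : ℝ))
              + 1 / ((N₁ + p : ℕ) + 1 : ℝ)) / 2 ≤ a (N₁ + p + 1) / b (N₁ + p + 1)
          rw [add_div, ← add_assoc]
          linarith [ihp, h]
      have hrt : ∀ p : ℕ, a (N₁ + p) / b (N₁ + p) < t := by
        intro p
        have h := hcon (N₁ + p) (by omega)
        rw [div_lt_iff₀ (hbpos _ (by omega))]
        simp only [ha, hbdef]
        exact_mod_cast h
      have hr0 : (0 : ℝ) ≤ a N₁ / b N₁ := by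
        apply div_nonneg _ (hbpos N₁ le_rfl).le
        simp only [ha]; exact Nat.cast_nonneg _
      -- divergence of harmonic series
      obtain ⟨M, hM⟩ := Filter.eventually_atTop.mp
        (Real.tendsto_sum_range_one_div_nat_succ_atTop.eventually_gt_atTop
          ((∑ i ∈ Finset.range N₁, (1 / (i + 1) : ℝ)) + 2 * t))
      have hHM := hM (N₁ + M) (by omega)
      have hsum : ∑ i ∈ Finset.range (N₁ + M), (1 / (i + 1) : ℝ)
          = (∑ i ∈ Finset.range N₁, (1 / (i + 1) : ℝ))
            + ∑ i ∈ Finset.range M, (1 / ((N₁ + i : ℕ) + 1) : ℝ) := by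
        rw [Finset.sum_range_add]
      have h1 := hacc M
      have h2 := hrt M
      have : (2 : ℝ) * t < ∑ i ∈ Finset.range M, (1 / ((N₁ + i : ℕ) + 1) : ℝ) := by
        rw [hsum] at hHM; linarith
      linarith
    obtain ⟨n₀, hn₀, hbase⟩ := hex
    refine ⟨n₀, fun n hn => ?_⟩
    induction n, hn using Nat.le_induction with
    | base => exact hbase
    | succ n hn ih' => exact step n (le_trans hn₀ hn) ih'

/-- For every fixed `m ≥ 1` the sequence `n ↦ S(n,m)/n!` is eventually not
log-concave: for all large `n`,
`(S(n,m)/n!)² < (S(n-1,m)/(n-1)!)·(S(n+1,m)/(n+1)!)`. -/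
theorem stirling_eventually_not_logConcave (m : ℕ) (hm : 1 ≤ m) :
    ∃ N : ℕ, ∀ n, N ≤ n →
      ((stirlingFirst n m : ℝ) / (Nat.factorial n : ℝ)) ^ 2
        < ((stirlingFirst (n - 1) m : ℝ) / (Nat.factorial (n - 1) : ℝ)) *
            ((stirlingFirst (n + 1) m : ℝ) / (Nat.factorial (n + 1) : ℝ)) := by
  obtain ⟨j, rfl⟩ : ∃ j, m = j + 1 := ⟨m - 1, by omega⟩
  obtain ⟨N₂, hN₂⟩ := stirling_ratio_large j 3
  refine ⟨N₂ + j + 3, fun n hn => ?_⟩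
  obtain ⟨k, rfl⟩ : ∃ k, n = k + 1 := ⟨n - 1, by omega⟩
  have hk2 : 2 ≤ k := by omega
  simp only [Nat.add_sub_cancel]
  have h3 : 3 * stirlingFirst k j ≤ stirlingFirst k (j + 1) := hN₂ k (by omega)
  have hA1 : 0 < stirlingFirst k (j + 1) := stirlingFirst_pos k (j + 1) (by omega) (by omega)
  have e1 : stirlingFirst (k + 1) (j + 1)
      = k * stirlingFirst k (j + 1) + stirlingFirst k j := stirlingFirst_rec k j
  have e2 : stirlingFirst (k + 2) (j + 1)
      = (k + 1) * stirlingFirst (k + 1) (j + 1) + stirlingFirst (k + 1) j :=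
    stirlingFirst_rec (k + 1) j
  have e3 : stirlingFirst (k + 1) j
      = k * stirlingFirst k j + stirlingFirst k (j - 1) := stirlingFirst_rec' k j (by omega)
  have hmain : ((k : ℝ) + 2) * (stirlingFirst (k + 1) (j + 1) : ℝ) ^ 2
      < ((k : ℝ) + 1) * ((stirlingFirst k (j + 1) : ℝ) * (stirlingFirst (k + 2) (j + 1) : ℝ)) := by
    have h3' : 3 * (stirlingFirst k j : ℝ) ≤ (stirlingFirst k (j + 1) : ℝ) := by
      exact_mod_cast h3
    have hA1' : (1 : ℝ) ≤ (stirlingFirst k (j + 1) : ℝ) := by exact_mod_cast hA1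
    have hk2' : (2 : ℝ) ≤ (k : ℝ) := by exact_mod_cast hk2
    have e1' : (stirlingFirst (k + 1) (j + 1) : ℝ)
        = k * stirlingFirst k (j + 1) + stirlingFirst k j := by exact_mod_cast e1
    have e2' : (stirlingFirst (k + 2) (j + 1) : ℝ)
        = ((k : ℝ) + 1) * stirlingFirst (k + 1) (j + 1) + stirlingFirst (k + 1) j := by
      rw [e2]; push_cast; ring
    have e3' : (stirlingFirst (k + 1) j : ℝ)
        = k * stirlingFirst k j + stirlingFirst k (j - 1) := by exact_mod_cast e3
    have hC : (0 : ℝ) ≤ (stirlingFirst k (j - 1) : ℝ) := Nat.cast_nonneg _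
    have hAnn : (0 : ℝ) ≤ (stirlingFirst k (j + 1) : ℝ) := Nat.cast_nonneg _
    have hknn : (0 : ℝ) ≤ (k : ℝ) := Nat.cast_nonneg _
    rw [e2', e3', e1']
    set A := (stirlingFirst k (j + 1) : ℝ)
    set B := (stirlingFirst k j : ℝ) with hBeq
    set C := (stirlingFirst k (j - 1) : ℝ)
    rcases Nat.eq_zero_or_pos (stirlingFirst k j) with hB0 | hBpos
    · have hB0' : B = 0 := by simp [B, hB0]
      rw [hB0']
      nlinarith [mul_nonneg hAnn hC, mul_nonneg (mul_nonneg hknn hAnn) hC,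
        sq_nonneg A, mul_nonneg hknn (sq_nonneg A)]
    · have hB1 : (1 : ℝ) ≤ B := by
        rw [hBeq]
        exact_mod_cast hBpos
      have hBnn : (0 : ℝ) ≤ B := by linarith
      have hAB3 : (0 : ℝ) ≤ A - 3 * B := by linarith
      nlinarith [mul_nonneg (mul_nonneg hknn hAnn) hAB3,
        mul_nonneg hBnn hAB3, mul_nonneg hAnn hC,
        mul_nonneg hknn (mul_nonneg hAnn hC),
        mul_le_mul hA1' hB1 (by norm_num) hAnn,
        mul_nonneg hknn (mul_nonneg hAnn hBnn),
        mul_nonneg hAnn hBnn]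
  have hf : ∀ i : ℕ, (0 : ℝ) < (Nat.factorial i : ℝ) := fun i => by
    exact_mod_cast Nat.factorial_pos i
  rw [div_pow, div_mul_div_comm, div_lt_div_iff₀ (by positivity) (mul_pos (hf k) (hf (k + 2)))]
  have hfr : (0 : ℝ) < ((k : ℝ) + 1) * ((Nat.factorial k : ℝ)) ^ 2 := by
    have := hf k; nlinarith
  have hmul := mul_lt_mul_of_pos_right hmain hfr
  have hf1 : ((k + 1).factorial : ℝ) = ((k : ℝ) + 1) * (Nat.factorial k : ℝ) := by
    rw [Nat.factorial_succ]; push_cast; ring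
  have hf2 : ((k + 2).factorial : ℝ) = ((k : ℝ) + 2) * ((k + 1).factorial : ℝ) := by
    rw [show k + 2 = (k + 1) + 1 from rfl, Nat.factorial_succ]; push_cast; ring
  rw [hf2, hf1]
  nlinarith [hmul]
end
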